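/- Let ω_i be a fundamental weight of a simple Lie algebra and fix any reduced decomposition t_{-ω_i} = π s_{t_1} ⋯ s_{t_r} in the extended affine Weyl group, with associated sequence of affine coroots β_j = s_{t_r} ⋯ s_{t_{j+1}}(α_{t_j}^∨). Then the multiset of real parts {Re β_j} equals the multiset in which each negative coroot γ ∈ Δ₋^∨ with ⟨γ, ω_i⟩ < 0 appears exactly -⟨γ, ω_i⟩ times, and for each such γ the set {β_j : Re β_j = γ} equals {γ + δ, γ + 2δ, ..., γ - ⟨γ, ω_i⟩ δ}. -/
import Mathlib


/-!
STATEMENT 10: Description of the β-sequence of a reduced decomposition of `t_{-ω_i}`.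

We model affine coroots as pairs `(γ, d)` (`γ + dδ`) with `γ` in the (finite) coroot
lattice `V` and `d ∈ ℤ`; `(γ, d)` is positive iff `d > 0`, or `d = 0` and `γ ∈ Δpos`.  The
translation `t_{-ω_i}` sends `γ + dδ` to `γ + (d + ⟨γ, ω_i⟩)δ` (`pairω γ = ⟨γ, ω_i⟩`).  The
β-sequence of a reduced decomposition of `t_{-ω_i}` is (injectively) the list of positive
affine coroots mapped to negative ones by `t_{-ω_i}`; this is taken as the hypothesis
`hchar` characterizing `β`.  The conclusions: every `Re β_j` is a negative coroot `γ` with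
`⟨γ, ω_i⟩ < 0`; each such `γ` occurs exactly `-⟨γ, ω_i⟩` times; and for each such `γ` the
set of degrees `{d : (γ, d) ∈ {β_j}}` is `{1, 2, …, -⟨γ, ω_i⟩}`.
-/

/-- Positivity of an affine coroot `γ + dδ`. -/
def AffCorootPos {V : Type*} (Δpos : Set V) (p : V × ℤ) : Prop :=
  0 < p.2 ∨ (p.2 = 0 ∧ p.1 ∈ Δpos)

theorem beta_sequence_of_fundamental_translation
    {V : Type*} [AddCommGroup V]
    (Δpos : Set V)                        -- positive coroots of the finite system
    (pairω : V → ℤ)                       -- `γ ↦ ⟨γ, ω_i⟩`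
    (hdisj : ∀ γ ∈ Δpos, -γ ∉ Δpos)
    (hdom : ∀ γ ∈ Δpos, 0 ≤ pairω γ)      -- `ω_i` is dominant
    {r : ℕ} (β : Fin r → V × ℤ)           -- the β-sequence of a reduced decomposition
    (hroots : ∀ j, (β j).1 ∈ Δpos ∨ -(β j).1 ∈ Δpos)
    (hβinj : Function.Injective β)
    -- `β` enumerates the positive affine coroots mapped to negative ones by `t_{-ω_i}`:
    (hchar : ∀ (γ : V) (d : ℤ), (γ, d) ∈ Set.range β ↔
      (AffCorootPos Δpos (γ, d) ∧ ¬ AffCorootPos Δpos (γ, d + pairω γ))) :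
    -- every real part is a negative coroot pairing negatively with `ω_i` …
    (∀ j, -(β j).1 ∈ Δpos ∧ pairω (β j).1 < 0) ∧
    -- …each such `γ` occurs exactly `-⟨γ, ω_i⟩` times…
    (∀ γ : V, -γ ∈ Δpos → pairω γ < 0 →
      Nat.card {j : Fin r // (β j).1 = γ} = (-pairω γ).toNat) ∧
    -- …with set of degrees `{γ + δ, …, γ - ⟨γ, ω_i⟩ δ}`.
    (∀ γ : V, -γ ∈ Δpos → pairω γ < 0 →
      {d : ℤ | (γ, d) ∈ Set.range β} = Set.Icc 1 (-pairω γ)) := by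
  have hset : ∀ γ : V, γ ∉ Δpos → ∀ d : ℤ,
      ((γ, d) ∈ Set.range β ↔ (1 ≤ d ∧ d ≤ -pairω γ)) := by
    intro γ hnot d
    rw [hchar]
    unfold AffCorootPos
    dsimp only
    constructor
    · rintro ⟨hp, hn⟩
      have hd : 0 < d := by
        rcases hp with h | ⟨_, h⟩
        · exact h
        · exact absurd h hnot
      have h2 : ¬ 0 < d + pairω γ := fun h => hn (Or.inl h)
      omega
    · rintro ⟨h1, h2⟩
      refine ⟨Or.inl (by omega), ?_⟩
      rintro (h | ⟨h, hm⟩)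
      · omega
      · exact hnot hm
  have h1 : ∀ j, -(β j).1 ∈ Δpos ∧ pairω (β j).1 < 0 := by
    intro j
    obtain ⟨hpos, hneg⟩ := (hchar (β j).1 (β j).2).1 ⟨j, rfl⟩
    have hnotpos : (β j).1 ∉ Δpos := by
      intro hmem
      have hd : 0 ≤ (β j).2 := by
        rcases hpos with h | ⟨h, _⟩ <;> omega
      have hω := hdom _ hmem
      rcases lt_or_eq_of_le (by omega : (0:ℤ) ≤ (β j).2 + pairω (β j).1) with h' | h'
      · exact hneg (Or.inl h')
      · exact hneg (Or.inr ⟨h'.symm, hmem⟩)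
    have hγ : -(β j).1 ∈ Δpos := (hroots j).resolve_left hnotpos
    obtain ⟨hd1, hd2⟩ := (hset _ hnotpos _).1 ⟨j, rfl⟩
    exact ⟨hγ, by omega⟩
  refine ⟨h1, ?_, ?_⟩
  · intro γ hγ hω
    have hnot : γ ∉ Δpos := fun h => hdisj γ h hγ
    have e : {j : Fin r // (β j).1 = γ} ≃ ↑(Finset.Icc (1 : ℤ) (-pairω γ)) := by
      refine Equiv.ofBijective (fun j => ⟨(β j.1).2, ?_⟩) ⟨?_, ?_⟩
      · rw [Finset.mem_Icc]
        exact (hset γ hnot _).1 ⟨j.1, Prod.ext j.2 rfl⟩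
      · rintro ⟨j, hj⟩ ⟨k, hk⟩ h
        simp only [Subtype.mk.injEq] at h ⊢
        exact hβinj (Prod.ext (hj.trans hk.symm) h)
      · rintro ⟨d, hd⟩
        rw [Finset.mem_Icc] at hd
        obtain ⟨j, hj⟩ := (hset γ hnot d).2 hd
        exact ⟨⟨j, by rw [hj]⟩, Subtype.ext (show (β j).2 = d by rw [hj])⟩
    rw [Nat.card_eq_of_equiv_fin (e.trans (Finset.equivFin _)), Int.card_Icc]
    omega
  · intro γ hγ hω
    have hnot : γ ∉ Δpos := fun h => hdisj γ h hγ
    ext d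
    simpa [Set.mem_Icc] using hset γ hnot d
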